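/- Let R : ℝ⁶ → ℝ⁶ be a linear involution (R ∘ R = id) that is symplectic for the standard symplectic form ω, i.e. ω(Ru, Rv) = ω(u,v) for all u,v ∈ ℝ⁶. Then there exists an invertible linear map P : ℝ⁶ → ℝ⁶ with PᵀJP = J (a symplectic change of coordinates) such that P⁻¹RP is one of the following four matrices: the identity Id; diag(1,1,1,1,−1,−1); diag(1,1,−1,−1,−1,−1); or −Id. -/

import Mathlib

open Matrix Module LinearMap

/-- The standard symplectic matrix on `ℝ⁶`: block-diagonal with three `2×2`
blocks `[[0,1],[-1,0]]`. -/
noncomputable def J6 : Matrix (Fin 6) (Fin 6) ℝ :=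
  !![0,1,0,0,0,0; -1,0,0,0,0,0; 0,0,0,1,0,0; 0,0,-1,0,0,0; 0,0,0,0,0,1; 0,0,0,0,-1,0]

/-- The standard symplectic form on `ℝ⁶`: `ω(u,v) = uᵀ J v`. -/
noncomputable def ω6 (u v : Fin 6 → ℝ) : ℝ := u ⬝ᵥ J6.mulVec v

noncomputable def jval (i j : ℕ) : ℝ :=
  if i % 2 = 0 ∧ j = i + 1 then 1 else if j % 2 = 0 ∧ i = j + 1 then -1 else 0

lemma jval_shift (i j : ℕ) : jval (i + 2) (j + 2) = jval i j := by
  simp only [jval, Nat.add_mod_right]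
  have h1 : (j + 2 = i + 2 + 1) ↔ (j = i + 1) := by omega
  have h2 : (i + 2 = j + 2 + 1) ↔ (i = j + 1) := by omega
  simp [h1, h2]

lemma darboux : ∀ (k : ℕ) (V : Type) [AddCommGroup V] [Module ℝ V] [FiniteDimensional ℝ V]
    (B : LinearMap.BilinForm ℝ V), B.IsAlt → B.Nondegenerate → finrank ℝ V = k →
    Even k ∧ ∃ b : Basis (Fin k) ℝ V, ∀ i j : Fin k, B (b i) (b j) = jval i.val j.val := by
  intro k
  induction k using Nat.strong_induction_on with
  | _ k IH =>
    intro V _ _ _ B hAlt hNondeg hrk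
    have hRefl : B.IsRefl := hAlt.isRefl
    rcases Nat.eq_zero_or_pos k with hk0 | hkpos
    · subst hk0
      have : Subsingleton V := finrank_zero_iff.mp hrk
      refine ⟨Even.zero, ⟨Basis.empty V, fun i _ => i.elim0⟩⟩
    · -- pick e ≠ 0 and a partner f with B e f = 1
      have : Nontrivial V := by
        have : 0 < finrank ℝ V := by omega
        exact finrank_pos_iff.mp this
      obtain ⟨e, he⟩ := exists_ne (0 : V)
      obtain ⟨f', hf'⟩ : ∃ f', B e f' ≠ 0 := by
        by_contra h
        push_neg at h
        exact he (hNondeg.1 e h)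
      obtain ⟨f, hef⟩ : ∃ f, B e f = 1 :=
        ⟨(B e f')⁻¹ • f', by simp [inv_mul_cancel₀ hf']⟩
      have hfe : B f e = -1 := by
        have := LinearMap.IsAlt.neg hAlt f e
        rw [hef] at this; linarith
      have hee : B e e = 0 := hAlt e
      have hff : B f f = 0 := hAlt f
      -- e, f linearly independent
      have hli : LinearIndependent ℝ ![e, f] := by
        rw [LinearIndependent.pair_iff]
        intro s t hst
        have h1 : B e (s • e + t • f) = 0 := by rw [hst]; simp
        have h2 : B f (s • e + t • f) = 0 := by rw [hst]; simp
        simp [hee, hff, hef, hfe] at h1 h2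
        exact ⟨by linarith, by linarith⟩
      set W : Submodule ℝ V := Submodule.span ℝ (Set.range ![e, f]) with hW
      set bW : Basis (Fin 2) ℝ W := Basis.span hli with hbW
      have hbW0 : (bW 0 : V) = e := by rw [hbW, Basis.span_apply]; rfl
      have hbW1 : (bW 1 : V) = f := by rw [hbW, Basis.span_apply]; rfl
      have hWrk : finrank ℝ W = 2 := by
        rw [finrank_eq_card_basis bW, Fintype.card_fin]
      have heW : e ∈ W := Submodule.subset_span ⟨0, rfl⟩
      have hfW : f ∈ W := Submodule.subset_span ⟨1, rfl⟩
      -- restriction to W nondegenerate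
      have hWnd : (B.restrict W).Nondegenerate := by
        apply (LinearMap.IsRefl.nondegenerate_iff_separatingLeft (B := B.restrict W) (fun x y => hRefl x y)).mpr
        intro ⟨x, hx⟩ hx0
        have h1 : B x e = 0 := hx0 ⟨e, heW⟩
        have h2 : B x f = 0 := hx0 ⟨f, hfW⟩
        have hrange : Set.range ![e, f] = {e, f} := by
          ext x
          simp only [Set.mem_range, Fin.exists_fin_two, Matrix.cons_val_zero,
            Matrix.cons_val_one, Matrix.head_cons, Set.mem_insert_iff, Set.mem_singleton_iff]
          exact ⟨fun h => h.imp Eq.symm Eq.symm, fun h => h.imp Eq.symm Eq.symm⟩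
        rw [hW, hrange] at hx
        obtain ⟨c, d, rfl⟩ := Submodule.mem_span_pair.mp hx
        have hBe : B (c • e + d • f) e = -d := by simp [hee, hfe]; try ring
        have hBf : B (c • e + d • f) f = c := by simp [hff, hef]
        rw [h1] at hBe; rw [h2] at hBf
        have hc : c = 0 := hBf.symm
        have hd : d = 0 := by linarith
        exact Subtype.ext
          (show c • e + d • f = (0 : V) by rw [hc, hd, zero_smul, zero_smul, zero_add])
      set W' : Submodule ℝ V := B.orthogonal W with hW'
      have hcompl : IsCompl W W' :=
        (LinearMap.BilinForm.restrict_nondegenerate_iff_isCompl_orthogonal hRefl).mp hWnd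
      have hW'rk : finrank ℝ W' = k - 2 := by
        rw [hW', LinearMap.BilinForm.finrank_orthogonal hNondeg W, hrk, hWrk]
      -- restriction to W' nondegenerate
      have horthoWW' : ∀ x ∈ W, ∀ y ∈ W', B x y = 0 := fun x hx y hy => hy x hx
      have hW'nd : (B.restrict W').Nondegenerate := by
        apply (LinearMap.IsRefl.nondegenerate_iff_separatingLeft (B := B.restrict W') (fun x y => hRefl x y)).mpr
        intro ⟨x, hx⟩ hx0
        have hxall : ∀ v : V, B x v = 0 := by
          intro v
          have hv : v ∈ W ⊔ W' := by rw [hcompl.sup_eq_top]; trivial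
          obtain ⟨w, hw, w', hw', rfl⟩ := Submodule.mem_sup.mp hv
          have h1 : B x w = 0 := hRefl _ _ (horthoWW' w hw x hx)
          have h2 : B x w' = 0 := hx0 ⟨w', hw'⟩
          simp [h1, h2]
        ext; exact hNondeg.1 x hxall
      obtain ⟨hEven', b', hb'⟩ := IH (k - 2) (by omega) W' (B.restrict W')
        (fun x => hAlt x) hW'nd hW'rk
      have hk2 : 2 ≤ k := by
        have hle : finrank ℝ W ≤ finrank ℝ V := Submodule.finrank_le W
        rw [hWrk, hrk] at hle; exact hle
      have hkeq : 2 + (k - 2) = k := by omega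
      refine ⟨by rcases hEven' with ⟨m, hm⟩; exact ⟨m + 1, by omega⟩, ?_⟩
      set bsum : Basis (Fin 2 ⊕ Fin (k - 2)) ℝ V :=
        (bW.prod b').map (Submodule.prodEquivOfIsCompl W W' hcompl) with hbsum
      set eqv : (Fin 2 ⊕ Fin (k - 2)) ≃ Fin k := finSumFinEquiv.trans (finCongr hkeq) with heqv
      refine ⟨bsum.reindex eqv, ?_⟩
      -- values of bsum
      have hbsumL : ∀ i : Fin 2, bsum (Sum.inl i) = ((bW i : W) : V) := by
        intro i
        have h0 : (bW.prod b') (Sum.inl i) = (bW i, 0) :=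
          Prod.ext (Basis.prod_apply_inl_fst _ _ _) (Basis.prod_apply_inl_snd _ _ _)
        rw [hbsum, Basis.map_apply, h0, Submodule.coe_prodEquivOfIsCompl']
        simp
      have hbsumR : ∀ j : Fin (k-2), bsum (Sum.inr j) = ((b' j : W') : V) := by
        intro j
        have h0 : (bW.prod b') (Sum.inr j) = (0, b' j) :=
          Prod.ext (Basis.prod_apply_inr_fst _ _ _) (Basis.prod_apply_inr_snd _ _ _)
        rw [hbsum, Basis.map_apply, h0, Submodule.coe_prodEquivOfIsCompl']
        simp
      have key : ∀ s t : Fin 2 ⊕ Fin (k - 2),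
          B (bsum s) (bsum t) = jval (eqv s).val (eqv t).val := by
        intro s t
        have hval : ∀ i : Fin 2, ((eqv (Sum.inl i)).val) = i.val := by intro i; simp [heqv]
        have hvalR : ∀ j : Fin (k-2), ((eqv (Sum.inr j)).val) = 2 + j.val := by
          intro j; simp [heqv]
        rcases s with i | i <;> rcases t with j | j
        · rw [hbsumL, hbsumL, hval, hval]
          fin_cases i <;> fin_cases j <;>
            norm_num [jval, hbW0, hbW1, hee, hef, hfe, hff]
        · rw [hbsumL, hbsumR, hval, hvalR]
          rw [horthoWW' _ (bW i).2 _ (b' j).2]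
          have hilt : (i : ℕ) < 2 := i.2
          simp only [jval]
          split_ifs with h1 h2 <;> first | rfl | (exfalso; omega)
        · rw [hbsumR, hbsumL, hvalR, hval]
          rw [hRefl _ _ (horthoWW' _ (bW j).2 _ (b' i).2)]
          have hjlt : (j : ℕ) < 2 := j.2
          simp only [jval]
          split_ifs with h1 h2 <;> first | rfl | (exfalso; omega)
        · rw [hbsumR, hbsumR, hvalR, hvalR]
          have := hb' i j
          simp only [LinearMap.BilinForm.restrict_apply, LinearMap.domRestrict_apply] at this
          rw [this]
          rw [show 2 + (i:ℕ) = (i:ℕ) + 2 by ring, show 2 + (j:ℕ) = (j:ℕ) + 2 by ring,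
            jval_shift]
      intro i j
      rw [Basis.reindex_apply, Basis.reindex_apply, key,
        Equiv.apply_symm_apply, Equiv.apply_symm_apply]

noncomputable def Bform : LinearMap.BilinForm ℝ (Fin 6 → ℝ) :=
  LinearMap.mk₂ ℝ (fun u v => u ⬝ᵥ J6.mulVec v)
    (fun m₁ m₂ n => by simp [add_dotProduct])
    (fun c m n => by simp [smul_dotProduct])
    (fun m n₁ n₂ => by simp [mulVec_add, dotProduct_add])
    (fun c m n => by simp [mulVec_smul, dotProduct_smul])

lemma Bform_apply (u v : Fin 6 → ℝ) : Bform u v = u ⬝ᵥ J6.mulVec v := rfl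

lemma J6_transpose : J6ᵀ = -J6 := by
  ext i j
  fin_cases i <;> fin_cases j <;> norm_num [J6]

lemma vec6_0 (a0 a1 a2 a3 a4 a5 : ℝ) : ![a0,a1,a2,a3,a4,a5] 0 = a0 := rfl
lemma vec6_1 (a0 a1 a2 a3 a4 a5 : ℝ) : ![a0,a1,a2,a3,a4,a5] 1 = a1 := rfl
lemma vec6_2 (a0 a1 a2 a3 a4 a5 : ℝ) : ![a0,a1,a2,a3,a4,a5] 2 = a2 := rfl
lemma vec6_3 (a0 a1 a2 a3 a4 a5 : ℝ) : ![a0,a1,a2,a3,a4,a5] 3 = a3 := rfl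
lemma vec6_4 (a0 a1 a2 a3 a4 a5 : ℝ) : ![a0,a1,a2,a3,a4,a5] 4 = a4 := rfl
lemma vec6_5 (a0 a1 a2 a3 a4 a5 : ℝ) : ![a0,a1,a2,a3,a4,a5] 5 = a5 := rfl

lemma J6_eq_jval (i j : Fin 6) : J6 i j = jval i.val j.val := by
  fin_cases i <;> fin_cases j <;> norm_num [J6, jval]

lemma fv0 : ((0 : Fin 6) : ℕ) = 0 := rfl
lemma fv1 : ((1 : Fin 6) : ℕ) = 1 := rfl
lemma fv2 : ((2 : Fin 6) : ℕ) = 2 := rfl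
lemma fv3 : ((3 : Fin 6) : ℕ) = 3 := rfl
lemma fv4 : ((4 : Fin 6) : ℕ) = 4 := rfl
lemma fv5 : ((5 : Fin 6) : ℕ) = 5 := rfl

lemma J6_mul_J6 : J6 * J6 = -1 := by
  ext i j
  rw [Matrix.mul_apply]
  simp only [J6_eq_jval]
  rw [Fin.sum_univ_six]
  fin_cases i <;> fin_cases j <;>
    norm_num [jval, Matrix.one_apply, fv0, fv1, fv2, fv3, fv4, fv5] <;> decide

lemma Bform_skew (u v : Fin 6 → ℝ) : Bform u v = -(Bform v u) := by
  rw [Bform_apply, Bform_apply, dotProduct_mulVec]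
  have h1 : u ᵥ* J6 = -(J6 *ᵥ u) := by
    have := Matrix.vecMul_transpose (A := J6) (x := u)
    rw [J6_transpose] at this
    rw [← this]
    simp [Matrix.vecMul_neg]
  rw [h1]
  rw [neg_dotProduct, dotProduct_comm]

lemma Bform_alt : Bform.IsAlt := by
  intro u
  have := Bform_skew u u
  linarith

lemma Bform_nondeg : Bform.Nondegenerate := by
  apply (LinearMap.IsRefl.nondegenerate_iff_separatingLeft (B := Bform) Bform_alt.isRefl).mpr
  intro u hu
  have h2 : u ᵥ* J6 = 0 := by
    ext j
    have := hu (Pi.single j 1)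
    rw [Bform_apply, dotProduct_mulVec] at this
    rwa [dotProduct_single, mul_one] at this
  have h3 : u ᵥ* (J6 * J6) = 0 := by
    rw [← Matrix.vecMul_vecMul, h2, Matrix.zero_vecMul]
  rw [J6_mul_J6] at h3
  have : -u = 0 := by
    rw [← h3]; simp [Matrix.vecMul_neg]
  exact neg_eq_zero.mp this

lemma jval_shift_even (m i j : ℕ) : jval (m + m + i) (m + m + j) = jval i j := by
  induction m with
  | zero => simp
  | succ n ih =>
    have e1 : n + 1 + (n + 1) + i = (n + n + i) + 2 := by ring
    have e2 : n + 1 + (n + 1) + j = (n + n + j) + 2 := by ring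
    rw [e1, e2, jval_shift, ih]

/-- Every linear symplectic involution of `(ℝ⁶, ω)` is symplectically
conjugate to one of `Id`, `diag(1,1,1,1,-1,-1)`, `diag(1,1,-1,-1,-1,-1)`, `-Id`. -/
theorem normal_form_of_symplectic_involution
    (R : Matrix (Fin 6) (Fin 6) ℝ)
    (hinv : R * R = 1)
    (hsymp : ∀ u v : Fin 6 → ℝ, ω6 (R.mulVec u) (R.mulVec v) = ω6 u v) :
    ∃ P : Matrix (Fin 6) (Fin 6) ℝ, IsUnit P ∧ Pᵀ * J6 * P = J6 ∧
      (P⁻¹ * R * P = 1 ∨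
       P⁻¹ * R * P = Matrix.diagonal ![1, 1, 1, 1, -1, -1] ∨
       P⁻¹ * R * P = Matrix.diagonal ![1, 1, -1, -1, -1, -1] ∨
       P⁻¹ * R * P = -1) := by
  have hRefl : Bform.IsRefl := Bform_alt.isRefl
  have hB : ∀ u v, Bform (R *ᵥ u) (R *ᵥ v) = Bform u v := hsymp
  have hRR : ∀ u, R *ᵥ (R *ᵥ u) = u := by
    intro u; rw [Matrix.mulVec_mulVec, hinv, Matrix.one_mulVec]
  set L : (Fin 6 → ℝ) →ₗ[ℝ] (Fin 6 → ℝ) := Matrix.mulVecLin R with hL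
  set Vp : Submodule ℝ (Fin 6 → ℝ) := LinearMap.ker (L - LinearMap.id) with hVp
  set Vm : Submodule ℝ (Fin 6 → ℝ) := LinearMap.ker (L + LinearMap.id) with hVm
  have hmemp : ∀ u, u ∈ Vp ↔ R *ᵥ u = u := by
    intro u
    rw [hVp, LinearMap.mem_ker]
    constructor
    · intro h
      have : L u - u = 0 := h
      have := sub_eq_zero.mp this
      simpa [hL] using this
    · intro h
      show L u - u = 0
      rw [sub_eq_zero]; simpa [hL] using h
  have hmemm : ∀ u, u ∈ Vm ↔ R *ᵥ u = -u := by
    intro u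
    rw [hVm, LinearMap.mem_ker]
    constructor
    · intro h
      have : L u + u = 0 := h
      have : L u = -u := by linear_combination (norm := module) this
      simpa [hL] using this
    · intro h
      show L u + u = 0
      have : L u = -u := by simpa [hL] using h
      rw [this]; abel
  have hcompl : IsCompl Vp Vm := by
    constructor
    · rw [disjoint_iff_inf_le]
      rintro u ⟨h1, h2⟩
      rw [Submodule.mem_bot]
      have e1 := (hmemp u).mp h1
      have e2 := (hmemm u).mp h2
      have huu : u = -u := by rw [← e2, e1]
      have h2u : (2 : ℝ) • u = 0 := by
        rw [two_smul]
        nth_rewrite 2 [huu]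
        simp
      rcases smul_eq_zero.mp h2u with h | h
      · norm_num at h
      · exact h
    · rw [codisjoint_iff_le_sup]
      intro v _
      refine Submodule.mem_sup.mpr ⟨(1/2 : ℝ) • (v + R *ᵥ v), ?_, (1/2 : ℝ) • (v - R *ᵥ v), ?_, ?_⟩
      · rw [hmemp]
        rw [Matrix.mulVec_smul, Matrix.mulVec_add, hRR]
        rw [add_comm]
      · rw [hmemm]
        rw [Matrix.mulVec_smul, Matrix.mulVec_sub, hRR]
        rw [smul_sub, smul_sub, neg_sub]
      · rw [← smul_add]
        have : v + R *ᵥ v + (v - R *ᵥ v) = (2 : ℝ) • v := by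
          rw [two_smul]; abel
        rw [this, smul_smul]
        norm_num
  have hortho : ∀ u ∈ Vp, ∀ v ∈ Vm, Bform u v = 0 := by
    intro u hu v hv
    have e1 := (hmemp u).mp hu
    have e2 := (hmemm v).mp hv
    have := hB u v
    rw [e1, e2] at this
    rw [(Bform u).map_neg] at this
    linarith
  have hdecomp : ∀ v : Fin 6 → ℝ, ∃ w ∈ Vp, ∃ w' ∈ Vm, v = w + w' := by
    intro v
    have hv : v ∈ Vp ⊔ Vm := by rw [hcompl.sup_eq_top]; trivial
    obtain ⟨w, hw, w', hw', h⟩ := Submodule.mem_sup.mp hv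
    exact ⟨w, hw, w', hw', h.symm⟩
  have hVpnd : (Bform.restrict Vp).Nondegenerate := by
    apply (LinearMap.IsRefl.nondegenerate_iff_separatingLeft (B := Bform.restrict Vp) (fun x y => hRefl x y)).mpr
    intro ⟨x, hx⟩ h0
    refine Subtype.ext (Bform_nondeg.1 x ?_)
    intro v
    obtain ⟨w, hw, w', hw', rfl⟩ := hdecomp v
    have h1 : Bform x w = 0 := h0 ⟨w, hw⟩
    have h2 : Bform x w' = 0 := hortho x hx w' hw'
    rw [(Bform x).map_add, h1, h2, add_zero]
  have hVmnd : (Bform.restrict Vm).Nondegenerate := by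
    apply (LinearMap.IsRefl.nondegenerate_iff_separatingLeft (B := Bform.restrict Vm) (fun x y => hRefl x y)).mpr
    intro ⟨x, hx⟩ h0
    refine Subtype.ext (Bform_nondeg.1 x ?_)
    intro v
    obtain ⟨w, hw, w', hw', rfl⟩ := hdecomp v
    have h1 : Bform x w = 0 := hRefl _ _ (hortho w hw x hx)
    have h2 : Bform x w' = 0 := h0 ⟨w', hw'⟩
    rw [(Bform x).map_add, h1, h2, add_zero]
  set kp := finrank ℝ Vp with hkp
  set km := finrank ℝ Vm with hkm
  obtain ⟨hEvp, bp, hbp⟩ := darboux kp Vp (Bform.restrict Vp)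
    (fun x => Bform_alt x) hVpnd hkp.symm
  obtain ⟨hEvm, bm, hbm⟩ := darboux km Vm (Bform.restrict Vm)
    (fun x => Bform_alt x) hVmnd hkm.symm
  have h6 : kp + km = 6 := by
    rw [hkp, hkm, Submodule.finrank_add_eq_of_isCompl hcompl, Module.finrank_fin_fun]
  set eqv : (Fin kp ⊕ Fin km) ≃ Fin 6 := finSumFinEquiv.trans (finCongr h6) with heqv
  set bb : Basis (Fin 6) ℝ (Fin 6 → ℝ) :=
    (((bp.prod bm).map (Submodule.prodEquivOfIsCompl Vp Vm hcompl)).reindex eqv) with hbb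
  have hbbL : ∀ i : Fin kp, bb (eqv (Sum.inl i)) = ((bp i : Vp) : Fin 6 → ℝ) := by
    intro i
    rw [hbb, Basis.reindex_apply, Equiv.symm_apply_apply]
    have h0 : (bp.prod bm) (Sum.inl i) = (bp i, 0) :=
      Prod.ext (Basis.prod_apply_inl_fst _ _ _) (Basis.prod_apply_inl_snd _ _ _)
    rw [Basis.map_apply, h0, Submodule.coe_prodEquivOfIsCompl']
    simp
  have hbbR : ∀ j : Fin km, bb (eqv (Sum.inr j)) = ((bm j : Vm) : Fin 6 → ℝ) := by
    intro j
    rw [hbb, Basis.reindex_apply, Equiv.symm_apply_apply]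
    have h0 : (bp.prod bm) (Sum.inr j) = (0, bm j) :=
      Prod.ext (Basis.prod_apply_inr_fst _ _ _) (Basis.prod_apply_inr_snd _ _ _)
    rw [Basis.map_apply, h0, Submodule.coe_prodEquivOfIsCompl']
    simp
  have hvalL : ∀ i : Fin kp, ((eqv (Sum.inl i)) : ℕ) = i.val := by intro i; simp [heqv]
  have hvalR : ∀ j : Fin km, ((eqv (Sum.inr j)) : ℕ) = kp + j.val := by intro j; simp [heqv]
  obtain ⟨mp, hmp⟩ := hEvp
  -- values of the form on the basis
  have key : ∀ i j : Fin 6, Bform (bb i) (bb j) = J6 i j := by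
    intro i j
    obtain ⟨s, rfl⟩ := eqv.surjective i
    obtain ⟨t, rfl⟩ := eqv.surjective j
    rw [J6_eq_jval]
    rcases s with s | s <;> rcases t with t | t
    · rw [hbbL, hbbL, hvalL, hvalL]
      have := hbp s t
      simp only [LinearMap.BilinForm.restrict_apply, LinearMap.domRestrict_apply] at this
      exact this
    · rw [hbbL, hbbR, hvalL, hvalR]
      rw [hortho _ (bp s).2 _ (bm t).2]
      have hs : (s : ℕ) < kp := s.2
      simp only [jval]
      split_ifs with h1 h2 <;> first | rfl | (exfalso; omega)
    · rw [hbbR, hbbL, hvalR, hvalL]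
      rw [hRefl _ _ (hortho _ (bp t).2 _ (bm s).2)]
      have hs : (t : ℕ) < kp := t.2
      simp only [jval]
      split_ifs with h1 h2 <;> first | rfl | (exfalso; omega)
    · rw [hbbR, hbbR, hvalR, hvalR]
      have := hbm s t
      simp only [LinearMap.BilinForm.restrict_apply, LinearMap.domRestrict_apply] at this
      rw [this, hmp, jval_shift_even]
  -- action of R on the basis
  set d : Fin 6 → ℝ := fun i => if (i : ℕ) < kp then 1 else -1 with hd
  have hRb : ∀ i : Fin 6, R *ᵥ (bb i) = d i • bb i := by
    intro i
    obtain ⟨s, rfl⟩ := eqv.surjective i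
    rcases s with s | s
    · rw [hbbL, (hmemp _).mp (bp s).2]
      have h1 : ((eqv (Sum.inl s)) : ℕ) < kp := by rw [hvalL]; exact s.2
      simp only [hd, if_pos h1, one_smul]
    · rw [hbbR, (hmemm _).mp (bm s).2]
      have h1 : ¬ ((eqv (Sum.inr s)) : ℕ) < kp := by rw [hvalR]; omega
      simp only [hd, if_neg h1, neg_one_smul]
  set P : Matrix (Fin 6) (Fin 6) ℝ := Matrix.of (fun i j => bb j i) with hP
  have hPapp : ∀ i j, P i j = bb j i := fun i j => rfl
  have hPtoM : P = (Pi.basisFun ℝ (Fin 6)).toMatrix ⇑bb := by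
    ext i j
    rw [hPapp, Basis.toMatrix_apply, Pi.basisFun_repr]
  have hPunit : IsUnit P := by
    rw [hPtoM]
    have : Invertible ((Pi.basisFun ℝ (Fin 6)).toMatrix ⇑bb) :=
      (Pi.basisFun ℝ (Fin 6)).invertibleToMatrix bb
    exact isUnit_of_invertible _
  have hPdet : IsUnit P.det := (Matrix.isUnit_iff_isUnit_det P).mp hPunit
  have hPJ : Pᵀ * J6 * P = J6 := by
    ext i j
    have h1 : (Pᵀ * J6 * P) i j = ∑ l, (∑ k, bb i k * J6 k l) * bb j l := by
      simp [Matrix.mul_apply, Matrix.transpose_apply, hPapp, Finset.sum_mul]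
    have h2 : Bform (bb i) (bb j) = ∑ k, bb i k * (∑ l, J6 k l * bb j l) := by
      rw [Bform_apply]
      simp [dotProduct, Matrix.mulVec]
    have h3 : ∑ l, (∑ k, bb i k * J6 k l) * bb j l
        = ∑ k, bb i k * (∑ l, J6 k l * bb j l) := by
      simp_rw [Finset.sum_mul, Finset.mul_sum]
      rw [Finset.sum_comm]
      simp_rw [mul_assoc]
    rw [h1, h3, ← h2, key]
  have hRP : R * P = P * Matrix.diagonal d := by
    ext i j
    have hl : (R * P) i j = (R *ᵥ bb j) i := by
      simp [Matrix.mul_apply, hPapp, Matrix.mulVec, dotProduct]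
    rw [hl, hRb j, Matrix.mul_diagonal, hPapp]
    rw [Pi.smul_apply, smul_eq_mul, mul_comm]
  refine ⟨P, hPunit, hPJ, ?_⟩
  have hfinal : P⁻¹ * R * P = Matrix.diagonal d := by
    rw [mul_assoc, hRP, ← mul_assoc, Matrix.nonsing_inv_mul P hPdet, one_mul]
  rw [hfinal]
  have hkple : kp ≤ 6 := by omega
  have hmple : mp ≤ 3 := by omega
  interval_cases mp
  · right; right; right
    have hdv : d = fun _ => -1 := by
      funext i
      simp only [hd]
      rw [if_neg (by omega)]
    rw [hdv]
    ext i j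
    by_cases h : i = j <;>
      simp [Matrix.diagonal_apply, h, Matrix.one_apply]
  · right; right; left
    have hdv : d = ![1, 1, -1, -1, -1, -1] := by
      funext i
      fin_cases i <;> simp only [hd, Fin.val_mk] <;> split_ifs with h <;>
        first | rfl | (exfalso; omega)
    rw [hdv]
  · right; left
    have hdv : d = ![1, 1, 1, 1, -1, -1] := by
      funext i
      fin_cases i <;> simp only [hd, Fin.val_mk] <;> split_ifs with h <;>
        first | rfl | (exfalso; omega)
    rw [hdv]
  · left
    have hdv : d = fun _ => 1 := by
      funext i
      simp only [hd]
      rw [if_pos (by omega)]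
    rw [hdv, Matrix.diagonal_one]
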